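/- For every positive integer n and every permutation π of {1,...,n}, the T-graph T_π is 2P_3-free and Sun_4-free (and hence, since 2P_3 is an induced subgraph of P_7, also P_7-free). -/

import Mathlib

/-- `H` is (isomorphic to) an induced subgraph of `G`. -/
def IsInducedSubgraph {α β : Type*} (H : SimpleGraph α) (G : SimpleGraph β) : Prop :=
  ∃ f : α → β, Function.Injective f ∧ ∀ u v, G.Adj (f u) (f v) ↔ H.Adj u v

/-- `H` is (isomorphic to) a not necessarily induced subgraph of `G`. -/
def IsSubgraphOf {α β : Type*} (H : SimpleGraph α) (G : SimpleGraph β) : Prop :=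
  ∃ f : α → β, Function.Injective f ∧ ∀ u v, H.Adj u v → G.Adj (f u) (f v)

/-- `G` contains no induced subgraph isomorphic to `H`. -/
def HFree {α β : Type*} (H : SimpleGraph α) (G : SimpleGraph β) : Prop :=
  ¬ IsInducedSubgraph H G

/-- A graph is bipartite if its vertex set splits into two independent sets. -/
def IsBipartite {V : Type*} (G : SimpleGraph V) : Prop :=
  ∃ c : V → Bool, ∀ u v, G.Adj u v → c u ≠ c v

/-- The chordless path `P_k` on `k` vertices. -/
def pathN (k : ℕ) : SimpleGraph (Fin k) :=
  SimpleGraph.fromRel (fun u v => u.val + 1 = v.val)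

/-- The chordless cycle `C_4`. -/
def c4 : SimpleGraph (Fin 4) :=
  SimpleGraph.fromRel (fun u v => (u.val, v.val) ∈ [(0,1),(1,2),(2,3),(3,0)])

/-- `Sun_1`: a `C_4` (on 0,1,2,3) with one pendant vertex 4 attached to 0. -/
def sun1 : SimpleGraph (Fin 5) :=
  SimpleGraph.fromRel (fun u v => (u.val, v.val) ∈ [(0,1),(1,2),(2,3),(3,0),(0,4)])

/-- `Sun_4`: a `C_4` (on 0,1,2,3) with pendant vertices 4,5,6,7 attached to 0,1,2,3. -/
def sun4 : SimpleGraph (Fin 8) :=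
  SimpleGraph.fromRel (fun u v =>
    (u.val, v.val) ∈ [(0,1),(1,2),(2,3),(3,0),(0,4),(1,5),(2,6),(3,7)])

/-- `2P_3`: the disjoint union of two chordless paths on 3 vertices. -/
def twoP3 : SimpleGraph (Fin 6) :=
  SimpleGraph.fromRel (fun u v => (u.val, v.val) ∈ [(0,1),(1,2),(3,4),(4,5)])

/-- `S_{1,2,3}`: the 7-vertex tree with one degree-3 vertex (vertex 0) whose three
leaves (1, 3, 6) are at distances 1, 2 and 3 from it. -/
def s123 : SimpleGraph (Fin 7) :=
  SimpleGraph.fromRel (fun u v => (u.val, v.val) ∈ [(0,1),(0,2),(2,3),(0,4),(4,5),(5,6)])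

/-- The bipartite complement of `P_8` (vertices `0..7`, path edges `i (i+1)`,
parts = even vertices / odd vertices): an even and an odd vertex are adjacent
iff they are not consecutive. -/
def p8tilde : SimpleGraph (Fin 8) :=
  SimpleGraph.fromRel (fun u v =>
    u.val % 2 = 0 ∧ v.val % 2 = 1 ∧ u.val + 1 ≠ v.val ∧ v.val + 1 ≠ u.val)

/-- The T-graph `T_π` for a permutation (given as a map) `π` of `Fin n`.
Vertices: `A ⊕ B ⊕ C ⊕ D`, with edges exactly: `a_i b_{π(i)}`; all `c_i d_j`;
`a_i d_j` for `j ≤ i`; `b_i c_j` for `j ≤ i`. -/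
def Tgraph {n : ℕ} (π : Fin n → Fin n) : SimpleGraph (Fin n ⊕ Fin n ⊕ Fin n ⊕ Fin n) :=
  SimpleGraph.fromRel (fun u v =>
    match u, v with
    | Sum.inl i, Sum.inr (Sum.inl j) => π i = j
    | Sum.inr (Sum.inr (Sum.inl _)), Sum.inr (Sum.inr (Sum.inr _)) => True
    | Sum.inl i, Sum.inr (Sum.inr (Sum.inr j)) => j ≤ i
    | Sum.inr (Sum.inl i), Sum.inr (Sum.inr (Sum.inl j)) => j ≤ i
    | _, _ => False)

/-- The S-graph for witnessing (convex) permutations `μ, ρ` of a biconvex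
permutation `π = μ ∘ ρ⁻¹`. Vertices: `A ⊕ B ⊕ C`, edges exactly:
`b_i a_j` for `j ≤ ρ(i)` and `b_i c_j` for `j ≤ μ(i)`. -/
def Sgraph {n : ℕ} (μ ρ : Fin n → Fin n) : SimpleGraph (Fin n ⊕ Fin n ⊕ Fin n) :=
  SimpleGraph.fromRel (fun u v =>
    match u, v with
    | Sum.inr (Sum.inl i), Sum.inl j => j ≤ ρ i
    | Sum.inr (Sum.inl i), Sum.inr (Sum.inr j) => j ≤ μ i
    | _, _ => False)

/-- The permutation graph of `π`: `i ~ j` iff `(i - j)(π(i) - π(j)) < 0`. -/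
def permGraph {n : ℕ} (π : Fin n → Fin n) : SimpleGraph (Fin n) :=
  SimpleGraph.fromRel (fun u v => u < v ∧ π v < π u)

/-- The universal graph `H_{k,n}`: vertex `(i,j)` is adjacent to `(i+1,j')` iff `j' ≤ j`. -/
def Hgraph (k n : ℕ) : SimpleGraph (Fin k × Fin n) :=
  SimpleGraph.fromRel (fun u v => v.1.val = u.1.val + 1 ∧ v.2.val ≤ u.2.val)

/-- Pattern containment of (one-line) sequences: `π` is contained in `ρ` if `ρ` has a
subsequence order-isomorphic to `π`. -/
def Contained {m n : ℕ} (π : Fin m → ℕ) (ρ : Fin n → ℕ) : Prop :=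
  ∃ f : Fin m → Fin n, StrictMono f ∧ ∀ i j, π i ≤ π j ↔ ρ (f i) ≤ ρ (f j)

/-- Value at (1-indexed) position `p` of the one-line notation of the permutation
`π*_n = (4, 2, 6, 1, 8, 3, …, 2j, 2j−5, …, n−1, n−3)` of Section 2.1. -/
def pistarVal (n p : ℕ) : ℕ :=
  if p = 1 then 4
  else if p = 2 then 2
  else if p = n - 1 then n - 1
  else if p = n then n - 3
  else if p % 2 = 1 then p + 3
  else p - 3

/-- `π*_n` of Section 2.1 as a (0-indexed) sequence of natural numbers. -/
def pistar (n : ℕ) : Fin n → ℕ := fun i => pistarVal n (i.val + 1)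

/-- `π*_n` of Section 2.1 as a (0-indexed) map `Fin n → Fin n`. -/
def pistarFin (n : ℕ) : Fin n → Fin n :=
  fun i => ⟨(pistarVal n (i.val + 1) - 1) % n, Nat.mod_lt _ i.pos⟩

/-- Value at (1-indexed) position `p` of the one-line notation of the permutation
`π*_n = (2, 3, 5, 1, …, 2j+3, 2j, …, n, n−4, n−1, n−2)` of Section 2.2. -/
def pi2starVal (n p : ℕ) : ℕ :=
  if p = 1 then 2
  else if p = 2 then 3
  else if p = 3 then 5
  else if p = 4 then 1
  else if p = n - 3 then n
  else if p = n - 2 then n - 4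
  else if p = n - 1 then n - 1
  else if p = n then n - 2
  else if p % 2 = 1 then p + 2
  else p - 2

/-- `π*_n` of Section 2.2 as a (0-indexed) map `Fin n → Fin n`. -/
def pi2starFin (n : ℕ) : Fin n → Fin n :=
  fun i => ⟨(pi2starVal n (i.val + 1) - 1) % n, Nat.mod_lt _ i.pos⟩

/-- Value at (1-indexed) position `p` of the one-line notation of
`ρ*_n = (1, 2, 3, 5, …, n−3, n−1, n, n−2, …, 6, 4)`. -/
def rhostarVal (n p : ℕ) : ℕ :=
  if p = 1 then 1
  else if p = 2 then 2
  else if p ≤ n / 2 + 1 then 2 * p - 3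
  else if p = n / 2 + 2 then n
  else 2 * n - 2 * p + 4

/-- `ρ*_n` as a (0-indexed) map `Fin n → Fin n`. -/
def rhostarFin (n : ℕ) : Fin n → Fin n :=
  fun i => ⟨(rhostarVal n (i.val + 1) - 1) % n, Nat.mod_lt _ i.pos⟩

/-- Value at (1-indexed) position `p` of the one-line notation of
`μ*_n = (2, 3, 5, …, n−3, n, n−1, n−2, n−4, …, 6, 4, 1)`. -/
def mustarVal (n p : ℕ) : ℕ :=
  if p = 1 then 2
  else if p ≤ n / 2 - 1 then 2 * p - 1
  else if p = n / 2 then n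
  else if p = n / 2 + 1 then n - 1
  else if p ≤ n - 1 then 2 * n - 2 * p + 2
  else 1

/-- `μ*_n` as a (0-indexed) map `Fin n → Fin n`. -/
def mustarFin (n : ℕ) : Fin n → Fin n :=
  fun i => ⟨(mustarVal n (i.val + 1) - 1) % n, Nat.mod_lt _ i.pos⟩

/-- A map `ρ : Fin n → Fin n` is convex if for every `i` the set of positions `p`
with `i ≤ ρ p` is a set of consecutive elements. -/
def IsConvexFun {n : ℕ} (ρ : Fin n → Fin n) : Prop :=
  ∀ i p q r : Fin n, p ≤ q → q ≤ r → i ≤ ρ p → i ≤ ρ r → i ≤ ρ q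

/-- A graph is biconvex if it has a bipartition `(X, Xᶜ)` and a linear order
(induced by an injection into `ℕ`) on the vertices such that every neighborhood
of a vertex of `X` is an interval of `Xᶜ` and vice versa. -/
def IsBiconvex {V : Type*} (G : SimpleGraph V) : Prop :=
  ∃ (X : Set V) (f : V → ℕ), Function.Injective f ∧
    (∀ u v, G.Adj u v → (u ∈ X ↔ v ∉ X)) ∧
    (∀ x ∈ X, ∀ u v w, u ∉ X → v ∉ X → w ∉ X → f u ≤ f v → f v ≤ f w →
      G.Adj x u → G.Adj x w → G.Adj x v) ∧
    (∀ y ∉ X, ∀ u v w, u ∈ X → v ∈ X → w ∈ X → f u ≤ f v → f v ≤ f w →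
      G.Adj y u → G.Adj y w → G.Adj y v)

/-- `G` is a permutation graph: isomorphic to `permGraph π` for some permutation `π`. -/
def IsPermutationGraph {V : Type*} (G : SimpleGraph V) : Prop :=
  ∃ (n : ℕ) (π : Fin n → Fin n), Function.Bijective π ∧ Nonempty (G ≃g permGraph π)

/-- `G` is a `k`-letter graph: there is a partition of the vertices into `p ≤ k`
classes, each a clique or an independent set, and a linear order (an injection
into `ℕ`) such that the edges between any two distinct classes form one of the
four prescribed patterns. -/
def IsKLetterGraph {V : Type*} (k : ℕ) (G : SimpleGraph V) : Prop :=
  ∃ (p : ℕ) (_ : p ≤ k) (P : V → Fin p) (L : V → ℕ), Function.Injective L ∧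
    (∀ i : Fin p,
      (∀ u v, P u = i → P v = i → u ≠ v → G.Adj u v) ∨
      (∀ u v, P u = i → P v = i → ¬ G.Adj u v)) ∧
    (∀ i j : Fin p, i ≠ j →
      (∀ u v, P u = i → P v = j → (G.Adj u v ↔ L u < L v)) ∨
      (∀ u v, P u = i → P v = j → (G.Adj u v ↔ L v < L u)) ∨
      (∀ u v, P u = i → P v = j → G.Adj u v) ∨
      (∀ u v, P u = i → P v = j → ¬ G.Adj u v))

section TgraphAux

open SimpleGraph

variable {n : ℕ} {π : Fin n → Fin n}

private abbrev tA (i : Fin n) : Fin n ⊕ Fin n ⊕ Fin n ⊕ Fin n := Sum.inl i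
private abbrev tB (i : Fin n) : Fin n ⊕ Fin n ⊕ Fin n ⊕ Fin n := Sum.inr (Sum.inl i)
private abbrev tC (i : Fin n) : Fin n ⊕ Fin n ⊕ Fin n ⊕ Fin n := Sum.inr (Sum.inr (Sum.inl i))
private abbrev tD (i : Fin n) : Fin n ⊕ Fin n ⊕ Fin n ⊕ Fin n := Sum.inr (Sum.inr (Sum.inr i))

/-- Every induced `P₃` of `T_π` contains a vertex in `C` or in `D`. -/
private lemma tripleCD (hinj : Function.Injective π)
    {u v w : Fin n ⊕ Fin n ⊕ Fin n ⊕ Fin n}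
    (h1 : (Tgraph π).Adj v u) (h2 : (Tgraph π).Adj v w) (hne : u ≠ w) :
    (∃ m, tC m = u ∨ tC m = v ∨ tC m = w) ∨ (∃ m, tD m = u ∨ tD m = v ∨ tD m = w) := by
  rcases u with i | i | i | i <;> rcases v with j | j | j | j <;> rcases w with k | k | k | k <;>
    try first
      | exact Or.inl ⟨_, Or.inl rfl⟩
      | exact Or.inl ⟨_, Or.inr (Or.inl rfl)⟩
      | exact Or.inl ⟨_, Or.inr (Or.inr rfl)⟩
      | exact Or.inr ⟨_, Or.inl rfl⟩
      | exact Or.inr ⟨_, Or.inr (Or.inl rfl)⟩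
      | exact Or.inr ⟨_, Or.inr (Or.inr rfl)⟩
  all_goals exfalso
  all_goals (simp [Tgraph, SimpleGraph.fromRel_adj] at h1 h2) <;>
    first
      | exact hne (by rw [← h1, ← h2])
      | exact hne (by rw [hinj (h1.trans h2.symm)])

/-- A `P₃` of `T_π` avoiding `D` and containing a `C`-vertex contains a `B–C` edge. -/
private lemma tripleBC {u v w : Fin n ⊕ Fin n ⊕ Fin n ⊕ Fin n}
    (h1 : (Tgraph π).Adj v u) (h2 : (Tgraph π).Adj v w)
    (hC : ∃ m, tC m = u ∨ tC m = v ∨ tC m = w)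
    (hnoD : ∀ j : Fin n, ¬ (tD j = u ∨ tD j = v ∨ tD j = w)) :
    ∃ i m : Fin n, m ≤ i ∧ (tB i = u ∨ tB i = v ∨ tB i = w) ∧
      (tC m = u ∨ tC m = v ∨ tC m = w) := by
  obtain ⟨m, hm | hm | hm⟩ := hC
  · subst hm
    rcases v with j | j | j | j
    · exact absurd h1 (by simp [Tgraph, SimpleGraph.fromRel_adj])
    · have hle : m ≤ j := by simpa [Tgraph, SimpleGraph.fromRel_adj] using h1
      exact ⟨j, m, hle, Or.inr (Or.inl rfl), Or.inl rfl⟩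
    · exact absurd h1 (by simp [Tgraph, SimpleGraph.fromRel_adj])
    · exact absurd (Or.inr (Or.inl rfl)) (hnoD j)
  · subst hm
    rcases u with j | j | j | j
    · exact absurd h1 (by simp [Tgraph, SimpleGraph.fromRel_adj])
    · have hle : m ≤ j := by simpa [Tgraph, SimpleGraph.fromRel_adj] using h1
      exact ⟨j, m, hle, Or.inl rfl, Or.inr (Or.inl rfl)⟩
    · exact absurd h1 (by simp [Tgraph, SimpleGraph.fromRel_adj])
    · exact absurd (Or.inl rfl) (hnoD j)
  · subst hm
    rcases v with j | j | j | j
    · exact absurd h2 (by simp [Tgraph, SimpleGraph.fromRel_adj])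
    · have hle : m ≤ j := by simpa [Tgraph, SimpleGraph.fromRel_adj] using h2
      exact ⟨j, m, hle, Or.inr (Or.inl rfl), Or.inr (Or.inr rfl)⟩
    · exact absurd h2 (by simp [Tgraph, SimpleGraph.fromRel_adj])
    · exact absurd (Or.inr (Or.inl rfl)) (hnoD j)

/-- A `P₃` of `T_π` avoiding `C` and containing a `D`-vertex contains an `A–D` edge. -/
private lemma tripleAD {u v w : Fin n ⊕ Fin n ⊕ Fin n ⊕ Fin n}
    (h1 : (Tgraph π).Adj v u) (h2 : (Tgraph π).Adj v w)
    (hD : ∃ m, tD m = u ∨ tD m = v ∨ tD m = w)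
    (hnoC : ∀ j : Fin n, ¬ (tC j = u ∨ tC j = v ∨ tC j = w)) :
    ∃ i m : Fin n, m ≤ i ∧ (tA i = u ∨ tA i = v ∨ tA i = w) ∧
      (tD m = u ∨ tD m = v ∨ tD m = w) := by
  obtain ⟨m, hm | hm | hm⟩ := hD
  · subst hm
    rcases v with j | j | j | j
    · have hle : m ≤ j := by simpa [Tgraph, SimpleGraph.fromRel_adj] using h1
      exact ⟨j, m, hle, Or.inr (Or.inl rfl), Or.inl rfl⟩
    · exact absurd h1 (by simp [Tgraph, SimpleGraph.fromRel_adj])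
    · exact absurd (Or.inr (Or.inl rfl)) (hnoC j)
    · exact absurd h1 (by simp [Tgraph, SimpleGraph.fromRel_adj])
  · subst hm
    rcases u with j | j | j | j
    · have hle : m ≤ j := by simpa [Tgraph, SimpleGraph.fromRel_adj] using h1
      exact ⟨j, m, hle, Or.inl rfl, Or.inr (Or.inl rfl)⟩
    · exact absurd h1 (by simp [Tgraph, SimpleGraph.fromRel_adj])
    · exact absurd (Or.inl rfl) (hnoC j)
    · exact absurd h1 (by simp [Tgraph, SimpleGraph.fromRel_adj])
  · subst hm
    rcases v with j | j | j | j
    · have hle : m ≤ j := by simpa [Tgraph, SimpleGraph.fromRel_adj] using h2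
      exact ⟨j, m, hle, Or.inr (Or.inl rfl), Or.inr (Or.inr rfl)⟩
    · exact absurd h2 (by simp [Tgraph, SimpleGraph.fromRel_adj])
    · exact absurd (Or.inr (Or.inl rfl)) (hnoC j)
    · exact absurd h2 (by simp [Tgraph, SimpleGraph.fromRel_adj])

/-- `T_π` contains no pair of induced `P₃`'s with no edges between them. -/
private lemma key2P3 (hinj : Function.Injective π)
    {u v w u' v' w' : Fin n ⊕ Fin n ⊕ Fin n ⊕ Fin n}
    (h1 : (Tgraph π).Adj v u) (h2 : (Tgraph π).Adj v w) (hne : u ≠ w)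
    (h1' : (Tgraph π).Adj v' u') (h2' : (Tgraph π).Adj v' w') (hne' : u' ≠ w')
    (cross : ∀ x y, (x = u ∨ x = v ∨ x = w) → (y = u' ∨ y = v' ∨ y = w') →
      ¬ (Tgraph π).Adj x y) : False := by
  have adjCD : ∀ i j : Fin n, (Tgraph π).Adj (tC i) (tD j) := by
    intro i j; simp [Tgraph, SimpleGraph.fromRel_adj]
  have adjDC : ∀ i j : Fin n, (Tgraph π).Adj (tD i) (tC j) := fun i j => (adjCD j i).symm
  rcases tripleCD hinj h1 h2 hne with ⟨m, hm⟩ | ⟨m, hm⟩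
  · have hnoD2 : ∀ j, ¬ (tD j = u' ∨ tD j = v' ∨ tD j = w') :=
      fun j hj => cross _ _ hm hj (adjCD m j)
    rcases tripleCD hinj h1' h2' hne' with ⟨m', hm'⟩ | ⟨m', hm'⟩
    · have hnoD1 : ∀ j, ¬ (tD j = u ∨ tD j = v ∨ tD j = w) :=
        fun j hj => cross _ _ hj hm' (adjDC j m')
      obtain ⟨i1, k1, hle1, hB1, hC1⟩ := tripleBC h1 h2 ⟨m, hm⟩ hnoD1
      obtain ⟨i2, k2, hle2, hB2, hC2⟩ := tripleBC h1' h2' ⟨m', hm'⟩ hnoD2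
      have c1 := cross _ _ hB1 hC2
      have c2 := cross _ _ hC1 hB2
      simp [Tgraph, SimpleGraph.fromRel_adj] at c1 c2
      omega
    · exact hnoD2 m' hm'
  · have hnoC2 : ∀ j, ¬ (tC j = u' ∨ tC j = v' ∨ tC j = w') :=
      fun j hj => cross _ _ hm hj (adjDC m j)
    rcases tripleCD hinj h1' h2' hne' with ⟨m', hm'⟩ | ⟨m', hm'⟩
    · exact hnoC2 m' hm'
    · have hnoC1 : ∀ j, ¬ (tC j = u ∨ tC j = v ∨ tC j = w) :=
        fun j hj => cross _ _ hj hm' (adjCD j m')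
      obtain ⟨i1, k1, hle1, hA1, hD1⟩ := tripleAD h1 h2 ⟨m, hm⟩ hnoC1
      obtain ⟨i2, k2, hle2, hA2, hD2⟩ := tripleAD h1' h2' ⟨m', hm'⟩ hnoC2
      have c1 := cross _ _ hA1 hD2
      have c2 := cross _ _ hD1 hA2
      simp [Tgraph, SimpleGraph.fromRel_adj] at c1 c2
      omega

private lemma sunPendD {w1 w3 q1 q3 : Fin n ⊕ Fin n ⊕ Fin n ⊕ Fin n} {m1 m3 : Fin n}
    (hw1 : w1 = tD m1) (hw3 : w3 = tD m3)
    (pe1 : (Tgraph π).Adj w1 q1) (pe3 : (Tgraph π).Adj w3 q3)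
    (n13 : ¬ (Tgraph π).Adj q1 w3) (n31 : ¬ (Tgraph π).Adj q3 w1) : False := by
  subst hw1; subst hw3
  rcases q1 with i | i | i | i
  · have h1 : m1 ≤ i := by simpa [Tgraph, SimpleGraph.fromRel_adj] using pe1
    have h2 : ¬ m3 ≤ i := by simpa [Tgraph, SimpleGraph.fromRel_adj] using n13
    rcases q3 with k | k | k | k
    · have h3 : m3 ≤ k := by simpa [Tgraph, SimpleGraph.fromRel_adj] using pe3
      have h4 : ¬ m1 ≤ k := by simpa [Tgraph, SimpleGraph.fromRel_adj] using n31
      omega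
    · exact absurd pe3 (by simp [Tgraph, SimpleGraph.fromRel_adj])
    · exact n31 (by simp [Tgraph, SimpleGraph.fromRel_adj])
    · exact absurd pe3 (by simp [Tgraph, SimpleGraph.fromRel_adj])
  · exact absurd pe1 (by simp [Tgraph, SimpleGraph.fromRel_adj])
  · exact n13 (by simp [Tgraph, SimpleGraph.fromRel_adj])
  · exact absurd pe1 (by simp [Tgraph, SimpleGraph.fromRel_adj])

private lemma sunPendC {w0 w2 q0 q2 : Fin n ⊕ Fin n ⊕ Fin n ⊕ Fin n} {m0 m2 : Fin n}
    (hw0 : w0 = tC m0) (hw2 : w2 = tC m2)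
    (pe0 : (Tgraph π).Adj w0 q0) (pe2 : (Tgraph π).Adj w2 q2)
    (n02 : ¬ (Tgraph π).Adj q0 w2) (n20 : ¬ (Tgraph π).Adj q2 w0) : False := by
  subst hw0; subst hw2
  rcases q0 with i | i | i | i
  · exact absurd pe0 (by simp [Tgraph, SimpleGraph.fromRel_adj])
  · have h1 : m0 ≤ i := by simpa [Tgraph, SimpleGraph.fromRel_adj] using pe0
    have h2 : ¬ m2 ≤ i := by simpa [Tgraph, SimpleGraph.fromRel_adj] using n02
    rcases q2 with k | k | k | k
    · exact absurd pe2 (by simp [Tgraph, SimpleGraph.fromRel_adj])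
    · have h3 : m2 ≤ k := by simpa [Tgraph, SimpleGraph.fromRel_adj] using pe2
      have h4 : ¬ m0 ≤ k := by simpa [Tgraph, SimpleGraph.fromRel_adj] using n20
      omega
    · exact absurd pe2 (by simp [Tgraph, SimpleGraph.fromRel_adj])
    · exact n20 (by simp [Tgraph, SimpleGraph.fromRel_adj])
  · exact absurd pe0 (by simp [Tgraph, SimpleGraph.fromRel_adj])
  · exact n02 (by simp [Tgraph, SimpleGraph.fromRel_adj])

/-- No induced `Sun₄` in `T_π` whose cycle vertex `w0` lies in `A ∪ C`. -/
private lemma sunAC (hinj : Function.Injective π)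
    {w0 w1 w2 w3 q0 q1 q2 q3 : Fin n ⊕ Fin n ⊕ Fin n ⊕ Fin n}
    (e01 : (Tgraph π).Adj w0 w1) (e12 : (Tgraph π).Adj w1 w2)
    (e23 : (Tgraph π).Adj w2 w3) (e30 : (Tgraph π).Adj w3 w0)
    (pe0 : (Tgraph π).Adj w0 q0) (pe1 : (Tgraph π).Adj w1 q1)
    (pe2 : (Tgraph π).Adj w2 q2) (pe3 : (Tgraph π).Adj w3 q3)
    (n02 : ¬ (Tgraph π).Adj q0 w2) (n20 : ¬ (Tgraph π).Adj q2 w0)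
    (n13 : ¬ (Tgraph π).Adj q1 w3) (n31 : ¬ (Tgraph π).Adj q3 w1)
    (d02 : w0 ≠ w2) (d13 : w1 ≠ w3)
    (dq0w1 : q0 ≠ w1) (dq0w3 : q0 ≠ w3) (dq2w1 : q2 ≠ w1) (dq2w3 : q2 ≠ w3)
    (hw0 : (∃ s, w0 = tA s) ∨ (∃ m, w0 = tC m)) : False := by
  rcases hw0 with ⟨s, rfl⟩ | ⟨m0, rfl⟩
  · -- w0 = tA s
    rcases w1 with k1 | k1 | k1 | k1
    · exact absurd e01 (by simp [Tgraph, SimpleGraph.fromRel_adj])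
    · -- w1 = tB k1
      have hk1 : π s = k1 := by simpa [Tgraph, SimpleGraph.fromRel_adj] using e01
      rcases w3 with k3 | k3 | k3 | k3
      · exact absurd e30 (by simp [Tgraph, SimpleGraph.fromRel_adj])
      · have hk3 : π s = k3 := by simpa [Tgraph, SimpleGraph.fromRel_adj] using e30
        exact d13 (by rw [← hk1, hk3])
      · exact absurd e30 (by simp [Tgraph, SimpleGraph.fromRel_adj])
      · -- w3 = tD k3
        rcases w2 with t | t | t | t
        · have ht : π t = k1 := by simpa [Tgraph, SimpleGraph.fromRel_adj] using e12
          exact d02 (congrArg _ (hinj (hk1.trans ht.symm)))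
        · exact absurd e12 (by simp [Tgraph, SimpleGraph.fromRel_adj])
        · -- w2 = tC t: use pendant q0
          rcases q0 with iq | iq | iq | iq
          · exact absurd pe0 (by simp [Tgraph, SimpleGraph.fromRel_adj])
          · have hq : π s = iq := by simpa [Tgraph, SimpleGraph.fromRel_adj] using pe0
            exact dq0w1 (by rw [← hq, hk1])
          · exact absurd pe0 (by simp [Tgraph, SimpleGraph.fromRel_adj])
          · exact n02 (by simp [Tgraph, SimpleGraph.fromRel_adj])
        · exact absurd e23 (by simp [Tgraph, SimpleGraph.fromRel_adj])
    · exact absurd e01 (by simp [Tgraph, SimpleGraph.fromRel_adj])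
    · -- w1 = tD k1
      rcases w3 with k3 | k3 | k3 | k3
      · exact absurd e30 (by simp [Tgraph, SimpleGraph.fromRel_adj])
      · -- w3 = tB k3
        have hk3 : π s = k3 := by simpa [Tgraph, SimpleGraph.fromRel_adj] using e30
        rcases w2 with t | t | t | t
        · have ht : π t = k3 := by simpa [Tgraph, SimpleGraph.fromRel_adj] using e23
          exact d02 (congrArg _ (hinj (hk3.trans ht.symm)))
        · exact absurd e12 (by simp [Tgraph, SimpleGraph.fromRel_adj])
        · -- w2 = tC t: use pendant q0
          rcases q0 with iq | iq | iq | iq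
          · exact absurd pe0 (by simp [Tgraph, SimpleGraph.fromRel_adj])
          · have hq : π s = iq := by simpa [Tgraph, SimpleGraph.fromRel_adj] using pe0
            exact dq0w3 (by rw [← hq, hk3])
          · exact absurd pe0 (by simp [Tgraph, SimpleGraph.fromRel_adj])
          · exact n02 (by simp [Tgraph, SimpleGraph.fromRel_adj])
        · exact absurd e12 (by simp [Tgraph, SimpleGraph.fromRel_adj])
      · exact absurd e30 (by simp [Tgraph, SimpleGraph.fromRel_adj])
      · exact sunPendD rfl rfl pe1 pe3 n13 n31
  · -- w0 = tC m0
    rcases w1 with k1 | k1 | k1 | k1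
    · exact absurd e01 (by simp [Tgraph, SimpleGraph.fromRel_adj])
    · -- w1 = tB k1
      rcases w2 with t | t | t | t
      · -- w2 = tA t: use pendant q2
        have ht : π t = k1 := by simpa [Tgraph, SimpleGraph.fromRel_adj] using e12
        rcases q2 with iq | iq | iq | iq
        · exact absurd pe2 (by simp [Tgraph, SimpleGraph.fromRel_adj])
        · have hq : π t = iq := by simpa [Tgraph, SimpleGraph.fromRel_adj] using pe2
          exact dq2w1 (by rw [← hq, ht])
        · exact absurd pe2 (by simp [Tgraph, SimpleGraph.fromRel_adj])
        · exact n20 (by simp [Tgraph, SimpleGraph.fromRel_adj])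
      · exact absurd e12 (by simp [Tgraph, SimpleGraph.fromRel_adj])
      · exact sunPendC rfl rfl pe0 pe2 n02 n20
      · exact absurd e12 (by simp [Tgraph, SimpleGraph.fromRel_adj])
    · exact absurd e01 (by simp [Tgraph, SimpleGraph.fromRel_adj])
    · -- w1 = tD k1
      rcases w3 with k3 | k3 | k3 | k3
      · exact absurd e30 (by simp [Tgraph, SimpleGraph.fromRel_adj])
      · -- w3 = tB k3
        rcases w2 with t | t | t | t
        · -- w2 = tA t: use pendant q2
          have ht : π t = k3 := by simpa [Tgraph, SimpleGraph.fromRel_adj] using e23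
          rcases q2 with iq | iq | iq | iq
          · exact absurd pe2 (by simp [Tgraph, SimpleGraph.fromRel_adj])
          · have hq : π t = iq := by simpa [Tgraph, SimpleGraph.fromRel_adj] using pe2
            exact dq2w3 (by rw [← hq, ht])
          · exact absurd pe2 (by simp [Tgraph, SimpleGraph.fromRel_adj])
          · exact n20 (by simp [Tgraph, SimpleGraph.fromRel_adj])
        · exact absurd e12 (by simp [Tgraph, SimpleGraph.fromRel_adj])
        · exact sunPendC rfl rfl pe0 pe2 n02 n20
        · exact absurd e12 (by simp [Tgraph, SimpleGraph.fromRel_adj])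
      · exact absurd e30 (by simp [Tgraph, SimpleGraph.fromRel_adj])
      · exact sunPendD rfl rfl pe1 pe3 n13 n31

end TgraphAux

/-- For every positive integer `n` and every permutation `π` of
`{1,…,n}`, the T-graph `T_π` is `2P_3`-free and `Sun_4`-free (hence also
`P_7`-free, since `2P_3` is an induced subgraph of `P_7`). -/
theorem Tgraph_twoP3_sun4_free (n : ℕ) (hn : 0 < n) (π : Equiv.Perm (Fin n)) :
    HFree twoP3 (Tgraph ⇑π) ∧ HFree sun4 (Tgraph ⇑π) ∧ HFree (pathN 7) (Tgraph ⇑π) := by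
  have hinj : Function.Injective (⇑π) := π.injective
  have h2p3 : HFree twoP3 (Tgraph ⇑π) := by
    rintro ⟨f, hf, hiff⟩
    have adjf : ∀ i j : Fin 6, twoP3.Adj i j → (Tgraph ⇑π).Adj (f i) (f j) :=
      fun i j h => (hiff i j).mpr h
    have nadjf : ∀ i j : Fin 6, ¬ twoP3.Adj i j → ¬ (Tgraph ⇑π).Adj (f i) (f j) :=
      fun i j h ha => h ((hiff i j).mp ha)
    refine key2P3 hinj (u := f 0) (v := f 1) (w := f 2) (u' := f 3) (v' := f 4) (w' := f 5)
      (adjf 1 0 (by simp [twoP3, SimpleGraph.fromRel_adj] <;> decide))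
      (adjf 1 2 (by simp [twoP3, SimpleGraph.fromRel_adj] <;> decide))
      (fun h => absurd (hf h) (by decide))
      (adjf 4 3 (by simp [twoP3, SimpleGraph.fromRel_adj] <;> decide))
      (adjf 4 5 (by simp [twoP3, SimpleGraph.fromRel_adj] <;> decide))
      (fun h => absurd (hf h) (by decide))
      (fun x y hx hy => ?_)
    rcases hx with rfl | rfl | rfl <;> rcases hy with rfl | rfl | rfl <;>
      exact nadjf _ _ (by simp [twoP3, SimpleGraph.fromRel_adj] <;> decide)
  have hsun : HFree sun4 (Tgraph ⇑π) := by
    rintro ⟨f, hf, hiff⟩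
    have adjf : ∀ i j : Fin 8, sun4.Adj i j → (Tgraph ⇑π).Adj (f i) (f j) :=
      fun i j h => (hiff i j).mpr h
    have nadjf : ∀ i j : Fin 8, ¬ sun4.Adj i j → ¬ (Tgraph ⇑π).Adj (f i) (f j) :=
      fun i j h ha => h ((hiff i j).mp ha)
    have dist : ∀ i j : Fin 8, i ≠ j → f i ≠ f j := fun i j hij h => hij (hf h)
    have e01 := adjf 0 1 (by simp [sun4, SimpleGraph.fromRel_adj] <;> decide)
    have e12 := adjf 1 2 (by simp [sun4, SimpleGraph.fromRel_adj] <;> decide)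
    have e23 := adjf 2 3 (by simp [sun4, SimpleGraph.fromRel_adj] <;> decide)
    have e30 := adjf 3 0 (by simp [sun4, SimpleGraph.fromRel_adj] <;> decide)
    have pe0 := adjf 0 4 (by simp [sun4, SimpleGraph.fromRel_adj] <;> decide)
    have pe1 := adjf 1 5 (by simp [sun4, SimpleGraph.fromRel_adj] <;> decide)
    have pe2 := adjf 2 6 (by simp [sun4, SimpleGraph.fromRel_adj] <;> decide)
    have pe3 := adjf 3 7 (by simp [sun4, SimpleGraph.fromRel_adj] <;> decide)
    have n42 := nadjf 4 2 (by simp [sun4, SimpleGraph.fromRel_adj] <;> decide)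
    have n60 := nadjf 6 0 (by simp [sun4, SimpleGraph.fromRel_adj] <;> decide)
    have n53 := nadjf 5 3 (by simp [sun4, SimpleGraph.fromRel_adj] <;> decide)
    have n71 := nadjf 7 1 (by simp [sun4, SimpleGraph.fromRel_adj] <;> decide)
    by_cases hAC : (∃ s, f 0 = tA s) ∨ (∃ m, f 0 = tC m)
    · exact sunAC hinj e01 e12 e23 e30 pe0 pe1 pe2 pe3 n42 n60 n53 n71
        (dist 0 2 (by decide)) (dist 1 3 (by decide)) (dist 4 1 (by decide))
        (dist 4 3 (by decide)) (dist 6 1 (by decide)) (dist 6 3 (by decide)) hAC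
    · have hw1 : (∃ s, f 1 = tA s) ∨ (∃ m, f 1 = tC m) := by
        have e01' := e01
        rcases hu : f 0 with s | s | s | s
        · exact absurd (Or.inl ⟨s, hu⟩) hAC
        · rw [hu] at e01'
          rcases hv : f 1 with t | t | t | t
          · exact Or.inl ⟨t, rfl⟩
          · rw [hv] at e01'
            exact absurd e01' (by simp [Tgraph, SimpleGraph.fromRel_adj])
          · exact Or.inr ⟨t, rfl⟩
          · rw [hv] at e01'
            exact absurd e01' (by simp [Tgraph, SimpleGraph.fromRel_adj])
        · exact absurd (Or.inr ⟨s, hu⟩) hAC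
        · rw [hu] at e01'
          rcases hv : f 1 with t | t | t | t
          · exact Or.inl ⟨t, rfl⟩
          · rw [hv] at e01'
            exact absurd e01' (by simp [Tgraph, SimpleGraph.fromRel_adj])
          · exact Or.inr ⟨t, rfl⟩
          · rw [hv] at e01'
            exact absurd e01' (by simp [Tgraph, SimpleGraph.fromRel_adj])
      exact sunAC hinj e12 e23 e30 e01 pe1 pe2 pe3 pe0 n53 n71 n60 n42
        (dist 1 3 (by decide)) (dist 2 0 (by decide)) (dist 5 2 (by decide))
        (dist 5 0 (by decide)) (dist 7 2 (by decide)) (dist 7 0 (by decide)) hw1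
  refine ⟨h2p3, hsun, ?_⟩
  rintro ⟨g, hg, hgiff⟩
  have pembed : ∀ u v : Fin 6,
      (pathN 7).Adj (![0,1,2,4,5,6] u) (![0,1,2,4,5,6] v) ↔ twoP3.Adj u v := by
    intro u v
    fin_cases u <;> fin_cases v <;>
      simp only [twoP3, pathN, SimpleGraph.fromRel_adj] <;> decide
  exact h2p3 ⟨g ∘ (![0,1,2,4,5,6] : Fin 6 → Fin 7),
    hg.comp (by decide : Function.Injective (![0,1,2,4,5,6] : Fin 6 → Fin 7)),
    fun u v => (hgiff _ _).trans (pembed u v)⟩
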